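/- arXiv:2402.00471 — 2 statements merged into one kernel-verified Lean document; each statement's English description precedes it below -/
import Mathlib

section
/- For discrete random variables on a finite probability space, the increasing convex dominance constraint Y ⪯_(ic) V (meaning E[(Y − η)^+] ≤ E[(V − η)^+] for all η ∈ ℝ) holds if and only if E[(Y − v_k)^+] ≤ E[(V − v_k)^+] for every realization v_k of V. -/
private lemma pos_part_mono {y a b : ℝ} (h : a ≤ b) : max (y - b) 0 ≤ max (y - a) 0 := by
  apply max_le _ (le_max_right _ _)
  exact le_max_of_le_left (by linarith)

private lemma pos_part_lip {y a b : ℝ} (h : a ≤ b) :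
    max (y - a) 0 ≤ max (y - b) 0 + (b - a) := by
  rcases le_total (y - a) 0 with h1 | h1
  · have h2 : (0:ℝ) ≤ max (y - b) 0 := le_max_right _ _
    rw [max_eq_right h1]; linarith
  · rw [max_eq_left h1]
    have := le_max_left (y - b) 0
    linarith

private lemma pos_part_convex {y a b t : ℝ} (ht0 : 0 ≤ t) (ht1 : t ≤ 1) :
    max (y - (t*a + (1-t)*b)) 0 ≤ t * max (y - a) 0 + (1-t) * max (y - b) 0 := by
  have h1 : y - a ≤ max (y-a) 0 := le_max_left _ _
  have h2 : y - b ≤ max (y-b) 0 := le_max_left _ _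
  have h3 : (0:ℝ) ≤ max (y-a) 0 := le_max_right _ _
  have h4 : (0:ℝ) ≤ max (y-b) 0 := le_max_right _ _
  apply max_le
  · nlinarith
  · nlinarith

private lemma pos_part_affine {y a b t : ℝ} (ht0 : 0 ≤ t) (ht1 : t ≤ 1)
    (hab : a ≤ b) (hy : y ≤ a ∨ b ≤ y) :
    max (y - (t*a + (1-t)*b)) 0 = t * max (y - a) 0 + (1-t) * max (y - b) 0 := by
  have hη1 : a ≤ t*a+(1-t)*b := by nlinarith
  have hη2 : t*a+(1-t)*b ≤ b := by nlinarith
  rcases hy with hy | hy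
  · rw [max_eq_right (by linarith : y - (t*a+(1-t)*b) ≤ 0),
      max_eq_right (by linarith : y - a ≤ 0),
      max_eq_right (by linarith : y - b ≤ 0)]
    ring
  · rw [max_eq_left (by linarith : 0 ≤ y - (t*a+(1-t)*b)),
      max_eq_left (by linarith : 0 ≤ y - a),
      max_eq_left (by linarith : 0 ≤ y - b)]
    ring

/-- On a finite probability space, increasing convex dominance
`Y ⪯₍ᵢ꜀₎ V` holds iff the defining inequality holds at every realization of `V`. -/
theorem increasing_convex_dominance_iff_realizations
    {Ω : Type*} [Fintype Ω] (p : Ω → ℝ)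
    (hp : ∀ ω, 0 < p ω) (hsum : ∑ ω, p ω = 1)
    (Y V : Ω → ℝ) :
    (∀ η : ℝ, ∑ ω, p ω * max (Y ω - η) 0 ≤ ∑ ω, p ω * max (V ω - η) 0)
    ↔ (∀ ω₀ : Ω, ∑ ω, p ω * max (Y ω - V ω₀) 0 ≤
        ∑ ω, p ω * max (V ω - V ω₀) 0) := by
  constructor
  · intro h ω₀; exact h (V ω₀)
  · intro h η
    have huniv : (Finset.univ : Finset Ω).Nonempty := by
      rcases (Finset.univ (α := Ω)).eq_empty_or_nonempty with he | hne
      · rw [he, Finset.sum_empty] at hsum; norm_num at hsum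
      · exact hne
    set S₁ := Finset.univ.filter (fun ω => V ω ≤ η) with hS₁
    set S₂ := Finset.univ.filter (fun ω => η ≤ V ω) with hS₂
    by_cases h2 : S₂.Nonempty
    · by_cases h1 : S₁.Nonempty
      · -- interior case: η between two consecutive realizations
        obtain ⟨ω₁, hω₁mem, hω₁⟩ := S₁.exists_max_image V h1
        obtain ⟨ω₂, hω₂mem, hω₂⟩ := S₂.exists_min_image V h2
        set a := V ω₁ with ha
        set b := V ω₂ with hb
        have haη : a ≤ η := (Finset.mem_filter.mp hω₁mem).2
        have hηb : η ≤ b := (Finset.mem_filter.mp hω₂mem).2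
        have hdich : ∀ ω, V ω ≤ a ∨ b ≤ V ω := by
          intro ω
          rcases le_total (V ω) η with hω | hω
          · exact Or.inl (hω₁ ω (Finset.mem_filter.mpr ⟨Finset.mem_univ _, hω⟩))
          · exact Or.inr (hω₂ ω (Finset.mem_filter.mpr ⟨Finset.mem_univ _, hω⟩))
        rcases eq_or_lt_of_le (le_trans haη hηb) with hab | hab
        · have : η = a := le_antisymm (hab ▸ hηb) haη
          rw [this]; exact h ω₁
        · set t := (b - η) / (b - a) with ht
          have hba : (0:ℝ) < b - a := by linarith
          have ht0 : 0 ≤ t := div_nonneg (by linarith) hba.le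
          have ht1 : t ≤ 1 := by
            rw [div_le_one hba]; linarith
          have hηeq : t*a + (1-t)*b = η := by
            field_simp [ht]
            have hk : t * (b - a) = b - η := by rw [ht]; exact div_mul_cancel₀ _ hba.ne'
            linarith
          calc ∑ ω, p ω * max (Y ω - η) 0
              ≤ ∑ ω, p ω * (t * max (Y ω - a) 0 + (1-t) * max (Y ω - b) 0) := by
                apply Finset.sum_le_sum
                intro ω _
                have hc := pos_part_convex (y := Y ω) (a := a) (b := b) ht0 ht1
                rw [hηeq] at hc
                exact mul_le_mul_of_nonneg_left hc (hp ω).le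
            _ = t * ∑ ω, p ω * max (Y ω - a) 0
                + (1-t) * ∑ ω, p ω * max (Y ω - b) 0 := by
                rw [Finset.mul_sum, Finset.mul_sum, ← Finset.sum_add_distrib]
                exact Finset.sum_congr rfl (fun ω _ => by ring)
            _ ≤ t * ∑ ω, p ω * max (V ω - a) 0
                + (1-t) * ∑ ω, p ω * max (V ω - b) 0 := by
                have g1 := mul_le_mul_of_nonneg_left (h ω₁) ht0
                have g2 := mul_le_mul_of_nonneg_left (h ω₂) (by linarith : (0:ℝ) ≤ 1 - t)
                exact add_le_add g1 g2
            _ = ∑ ω, p ω * max (V ω - η) 0 := by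
                rw [Finset.mul_sum, Finset.mul_sum, ← Finset.sum_add_distrib]
                apply Finset.sum_congr rfl
                intro ω _
                have he := pos_part_affine (y := V ω) ht0 ht1 hab.le (hdich ω)
                rw [hηeq] at he
                rw [he]; ring
      · -- case: η below every realization
        have hall : ∀ ω, η ≤ V ω := by
          intro ω
          by_contra hc
          exact h1 ⟨ω, Finset.mem_filter.mpr ⟨Finset.mem_univ _, le_of_not_ge hc⟩⟩
        obtain ⟨ω₂, hω₂mem, hω₂⟩ := S₂.exists_min_image V h2
        set b := V ω₂ with hb
        have hηb : η ≤ b := hall ω₂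
        have hbmin : ∀ ω, b ≤ V ω := fun ω =>
          hω₂ ω (Finset.mem_filter.mpr ⟨Finset.mem_univ _, hall ω⟩)
        have hps : ∑ ω, p ω * (b - η) = b - η := by
          rw [← Finset.sum_mul, hsum, one_mul]
        calc ∑ ω, p ω * max (Y ω - η) 0
            ≤ ∑ ω, p ω * (max (Y ω - b) 0 + (b - η)) := by
              apply Finset.sum_le_sum
              intro ω _
              exact mul_le_mul_of_nonneg_left (pos_part_lip hηb) (hp ω).le
          _ = (∑ ω, p ω * max (Y ω - b) 0) + (b - η) := by
              simp only [mul_add]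
              rw [Finset.sum_add_distrib, hps]
          _ ≤ (∑ ω, p ω * max (V ω - b) 0) + (b - η) := by
              exact add_le_add (h ω₂) le_rfl
          _ = ∑ ω, p ω * (max (V ω - b) 0 + (b - η)) := by
              simp only [mul_add]
              rw [Finset.sum_add_distrib, hps]
          _ = ∑ ω, p ω * max (V ω - η) 0 := by
              apply Finset.sum_congr rfl
              intro ω _
              rw [max_eq_left (by linarith [hbmin ω] : 0 ≤ V ω - b),
                max_eq_left (by linarith [hbmin ω, hηb] : 0 ≤ V ω - η)]
              ring
    · -- case: η above every realization
      have hall : ∀ ω, V ω ≤ η := by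
        intro ω
        by_contra hc
        exact h2 ⟨ω, Finset.mem_filter.mpr ⟨Finset.mem_univ _, le_of_not_ge hc⟩⟩
      obtain ⟨ω₁, hω₁mem, hω₁⟩ := Finset.univ.exists_max_image V huniv
      set a := V ω₁ with ha
      have hga : ∑ ω, p ω * max (V ω - a) 0 = 0 := by
        apply Finset.sum_eq_zero
        intro ω _
        rw [max_eq_right (by linarith [hω₁ ω (Finset.mem_univ ω)] : V ω - a ≤ 0), mul_zero]
      calc ∑ ω, p ω * max (Y ω - η) 0
          ≤ ∑ ω, p ω * max (Y ω - a) 0 := by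
            apply Finset.sum_le_sum
            intro ω _
            exact mul_le_mul_of_nonneg_left (pos_part_mono (hall ω₁)) (hp ω).le
        _ ≤ ∑ ω, p ω * max (V ω - a) 0 := h ω₁
        _ = 0 := hga
        _ ≤ ∑ ω, p ω * max (V ω - η) 0 := by
            apply Finset.sum_nonneg
            intro ω _
            exact mul_nonneg (hp ω).le (le_max_right _ _)
end

section
/- Let Y, V be random variables on a finite probability space with V having realizations v_1,…,v_K. Then Y ⪯_(ic) V holds if and only if there exist nonnegative reals s_{ω,k} ≥ 0 with s_{ω,k} ≥ Y(ω) − v_k for all ω, k, and ∑_ω ℙ(ω) s_{ω,k} ≤ E[(V − v_k)^+] for all k. -/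
/-- Pointwise convexity of the positive-part function `t ↦ (x - t)⁺`. -/
lemma pos_part_convex_s12 (x a b l u : ℝ) (hl : 0 ≤ l) (hu : 0 ≤ u) (hlu : l + u = 1) :
    max (x - (l * a + u * b)) 0 ≤ l * max (x - a) 0 + u * max (x - b) 0 := by
  have h1 : x - a ≤ max (x - a) 0 := le_max_left _ _
  have h2 : x - b ≤ max (x - b) 0 := le_max_left _ _
  have h3 : (0:ℝ) ≤ max (x - a) 0 := le_max_right _ _
  have h4 : (0:ℝ) ≤ max (x - b) 0 := le_max_right _ _
  apply max_le
  · have hx : x - (l * a + u * b) = l * (x - a) + u * (x - b) := by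
      linear_combination (-x) * hlu
    rw [hx]
    exact add_le_add (mul_le_mul_of_nonneg_left h1 hl) (mul_le_mul_of_nonneg_left h2 hu)
  · positivity

/-- Linear-programming representation of increasing convex
dominance via slack variables `s ω k ≥ (Y ω − v k)⁺`. -/
theorem increasing_convex_dominance_LP
    {Ω : Type*} [Fintype Ω] (p : Ω → ℝ)
    (hp : ∀ ω, 0 < p ω) (hsum : ∑ ω, p ω = 1)
    (Y V : Ω → ℝ)
    {K : Type*} (v : K → ℝ) (hreal : Set.range V = Set.range v) :
    (∀ η : ℝ, ∑ ω, p ω * max (Y ω - η) 0 ≤ ∑ ω, p ω * max (V ω - η) 0)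
    ↔ ∃ s : Ω → K → ℝ,
        (∀ ω k, 0 ≤ s ω k) ∧
        (∀ ω k, Y ω - v k ≤ s ω k) ∧
        (∀ k, ∑ ω, p ω * s ω k ≤ ∑ ω, p ω * max (V ω - v k) 0) := by
  classical
  constructor
  · intro h
    exact ⟨fun ω k => max (Y ω - v k) 0, fun ω k => le_max_right _ _,
      fun ω k => le_max_left _ _, fun k => h (v k)⟩
  · rintro ⟨s, hs0, hsY, hsums⟩
    -- the inequality holds at every realization of V
    have hV : ∀ ω0 : Ω,
        ∑ ω, p ω * max (Y ω - V ω0) 0 ≤ ∑ ω, p ω * max (V ω - V ω0) 0 := by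
      intro ω0
      have hmem : V ω0 ∈ Set.range v := hreal ▸ Set.mem_range_self ω0
      obtain ⟨k, hk⟩ := hmem
      rw [← hk]
      calc ∑ ω, p ω * max (Y ω - v k) 0 ≤ ∑ ω, p ω * s ω k := by
            apply Finset.sum_le_sum
            intro ω _
            exact mul_le_mul_of_nonneg_left (max_le (hsY ω k) (hs0 ω k)) (hp ω).le
        _ ≤ ∑ ω, p ω * max (V ω - v k) 0 := hsums k
    -- Ω is nonempty
    have hΩ : Nonempty Ω := by
      by_contra hc
      rw [not_nonempty_iff] at hc
      simp [Finset.univ_eq_empty] at hsum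
    intro η
    set S : Finset ℝ := Finset.univ.image V with hSdef
    have hVmemS : ∀ ω, V ω ∈ S := fun ω => Finset.mem_image_of_mem V (Finset.mem_univ ω)
    have hSne : S.Nonempty := ⟨V (Classical.arbitrary Ω), hVmemS _⟩
    have hSrange : ∀ x ∈ S, ∃ ω, V ω = x := by
      intro x hx
      obtain ⟨ω, _, hω⟩ := Finset.mem_image.mp hx
      exact ⟨ω, hω⟩
    have hSineq : ∀ x ∈ S,
        ∑ ω, p ω * max (Y ω - x) 0 ≤ ∑ ω, p ω * max (V ω - x) 0 := by
      intro x hx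
      obtain ⟨ω0, hω0⟩ := hSrange x hx
      exact hω0 ▸ hV ω0
    by_cases hmem : η ∈ S
    · exact hSineq η hmem
    set M := S.max' hSne with hM
    set m := S.min' hSne with hm
    have hVleM : ∀ ω, V ω ≤ M := fun ω => S.le_max' _ (hVmemS ω)
    have hmleV : ∀ ω, m ≤ V ω := fun ω => S.min'_le _ (hVmemS ω)
    by_cases hMη : M ≤ η
    · -- η above all values of V: LHS is 0
      have hgM : ∑ ω, p ω * max (V ω - M) 0 = 0 := by
        apply Finset.sum_eq_zero
        intro ω _
        rw [max_eq_right (sub_nonpos.mpr (hVleM ω)), mul_zero]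
      have h0 : ∑ ω, p ω * max (Y ω - M) 0 ≤ 0 := by
        have := hSineq M (S.max'_mem hSne)
        linarith
      have hnn : ∀ ω ∈ Finset.univ, (0:ℝ) ≤ p ω * max (Y ω - M) 0 := by
        intro ω _
        exact mul_nonneg (hp ω).le (le_max_right _ _)
      have hzero : ∑ ω, p ω * max (Y ω - M) 0 = 0 :=
        le_antisymm h0 (Finset.sum_nonneg hnn)
      have hYle : ∀ ω, Y ω ≤ M := by
        intro ω
        have := (Finset.sum_eq_zero_iff_of_nonneg hnn).mp hzero ω (Finset.mem_univ ω)
        have hmax0 : max (Y ω - M) 0 = 0 := by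
          rcases mul_eq_zero.mp this with h' | h'
          · exact absurd h' (hp ω).ne'
          · exact h'
        by_contra hc
        push_neg at hc
        have : max (Y ω - M) 0 = Y ω - M := max_eq_left (by linarith)
        linarith [this ▸ hmax0]
      have hflhs : ∑ ω, p ω * max (Y ω - η) 0 = 0 := by
        apply Finset.sum_eq_zero
        intro ω _
        rw [max_eq_right (by linarith [hYle ω] : Y ω - η ≤ 0), mul_zero]
      rw [hflhs]
      exact Finset.sum_nonneg fun ω _ => mul_nonneg (hp ω).le (le_max_right _ _)
    push_neg at hMη
    by_cases hηm : η ≤ m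
    · -- η below all values of V: shift by (m - η) using 1-Lipschitz bound
      calc ∑ ω, p ω * max (Y ω - η) 0
          ≤ ∑ ω, p ω * (max (Y ω - m) 0 + (m - η)) := by
            apply Finset.sum_le_sum
            intro ω _
            apply mul_le_mul_of_nonneg_left _ (hp ω).le
            apply max_le
            · have : Y ω - m ≤ max (Y ω - m) 0 := le_max_left _ _
              linarith
            · have : (0:ℝ) ≤ max (Y ω - m) 0 := le_max_right _ _
              linarith
        _ = ∑ ω, (p ω * max (Y ω - m) 0 + p ω * (m - η)) := by
            apply Finset.sum_congr rfl; intros; ring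
        _ = (∑ ω, p ω * max (Y ω - m) 0) + (∑ ω, p ω) * (m - η) := by
            rw [Finset.sum_add_distrib, ← Finset.sum_mul]
        _ = (∑ ω, p ω * max (Y ω - m) 0) + (m - η) := by
            rw [hsum, one_mul]
        _ ≤ (∑ ω, p ω * max (V ω - m) 0) + (m - η) := by
            have := hSineq m (S.min'_mem hSne)
            linarith
        _ = (∑ ω, p ω * max (V ω - m) 0) + (∑ ω, p ω) * (m - η) := by
            rw [hsum, one_mul]
        _ = ∑ ω, (p ω * max (V ω - m) 0 + p ω * (m - η)) := by
            rw [Finset.sum_add_distrib, ← Finset.sum_mul]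
        _ = ∑ ω, p ω * max (V ω - η) 0 := by
            apply Finset.sum_congr rfl
            intro ω _
            rw [max_eq_left (sub_nonneg.mpr (hmleV ω)),
              max_eq_left (by linarith [hmleV ω] : (0:ℝ) ≤ V ω - η)]
            ring
    push_neg at hηm
    -- middle case: m < η < M, η ∉ S
    set A := S.filter (· ≤ η) with hA
    set B := S.filter (η ≤ ·) with hB
    have hAne : A.Nonempty := ⟨m, Finset.mem_filter.mpr ⟨S.min'_mem hSne, hηm.le⟩⟩
    have hBne : B.Nonempty := ⟨M, Finset.mem_filter.mpr ⟨S.max'_mem hSne, hMη.le⟩⟩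
    set a := A.max' hAne with ha
    set b := B.min' hBne with hb
    have haS : a ∈ S := (Finset.mem_filter.mp (A.max'_mem hAne)).1
    have hbS : b ∈ S := (Finset.mem_filter.mp (B.min'_mem hBne)).1
    have haη : a < η := by
      have h1 : a ≤ η := (Finset.mem_filter.mp (A.max'_mem hAne)).2
      rcases lt_or_eq_of_le h1 with h | h
      · exact h
      · exact absurd (h ▸ haS) hmem
    have hηb : η < b := by
      have h1 : η ≤ b := (Finset.mem_filter.mp (B.min'_mem hBne)).2
      rcases lt_or_eq_of_le h1 with h | h
      · exact h
      · exact absurd (h ▸ hbS) hmem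
    have hdich : ∀ x ∈ S, x ≤ a ∨ b ≤ x := by
      intro x hx
      rcases le_total x η with h | h
      · exact Or.inl (A.le_max' x (Finset.mem_filter.mpr ⟨hx, h⟩))
      · exact Or.inr (B.min'_le x (Finset.mem_filter.mpr ⟨hx, h⟩))
    have hba : (0:ℝ) < b - a := by linarith
    set l := (b - η) / (b - a) with hl
    set u := (η - a) / (b - a) with hu
    have hl0 : 0 ≤ l := div_nonneg (by linarith) hba.le
    have hu0 : 0 ≤ u := div_nonneg (by linarith) hba.le
    have hlu : l + u = 1 := by
      rw [hl, hu, ← add_div]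
      field_simp
      ring
    have hηeq : l * a + u * b = η := by
      rw [hl, hu]
      field_simp
      ring
    have expand : ∀ X Z : Ω → ℝ,
        ∑ ω, p ω * (l * X ω + u * Z ω)
          = l * ∑ ω, p ω * X ω + u * ∑ ω, p ω * Z ω := by
      intro X Z
      rw [Finset.mul_sum, Finset.mul_sum, ← Finset.sum_add_distrib]
      apply Finset.sum_congr rfl
      intros; ring
    have hconv : ∑ ω, p ω * max (Y ω - η) 0
        ≤ l * (∑ ω, p ω * max (Y ω - a) 0) + u * (∑ ω, p ω * max (Y ω - b) 0) := by
      rw [← expand]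
      apply Finset.sum_le_sum
      intro ω _
      apply mul_le_mul_of_nonneg_left _ (hp ω).le
      calc max (Y ω - η) 0 = max (Y ω - (l * a + u * b)) 0 := by rw [hηeq]
        _ ≤ l * max (Y ω - a) 0 + u * max (Y ω - b) 0 :=
            pos_part_convex_s12 _ _ _ _ _ hl0 hu0 hlu
    have hglin : ∑ ω, p ω * max (V ω - η) 0
        = l * (∑ ω, p ω * max (V ω - a) 0) + u * (∑ ω, p ω * max (V ω - b) 0) := by
      rw [← expand]
      apply Finset.sum_congr rfl
      intro ω _
      congr 1
      rcases hdich (V ω) (hVmemS ω) with h | h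
      · rw [max_eq_right (by linarith : V ω - η ≤ 0),
          max_eq_right (by linarith : V ω - a ≤ 0),
          max_eq_right (by linarith : V ω - b ≤ 0)]
        ring
      · rw [max_eq_left (by linarith : (0:ℝ) ≤ V ω - η),
          max_eq_left (by linarith : (0:ℝ) ≤ V ω - a),
          max_eq_left (by linarith : (0:ℝ) ≤ V ω - b)]
        have : l * (V ω - a) + u * (V ω - b) = (l + u) * V ω - (l * a + u * b) := by ring
        rw [this, hlu, hηeq]
        ring
    calc ∑ ω, p ω * max (Y ω - η) 0
        ≤ l * (∑ ω, p ω * max (Y ω - a) 0) + u * (∑ ω, p ω * max (Y ω - b) 0) := hconv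
      _ ≤ l * (∑ ω, p ω * max (V ω - a) 0) + u * (∑ ω, p ω * max (V ω - b) 0) := by
          have h1 := hSineq a haS
          have h2 := hSineq b hbS
          have := mul_le_mul_of_nonneg_left h1 hl0
          have := mul_le_mul_of_nonneg_left h2 hu0
          linarith
      _ = ∑ ω, p ω * max (V ω - η) 0 := hglin.symm
end
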